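/- arXiv:1912.04808 — 3 statements merged into one kernel-verified Lean document; each statement's English description precedes it below -/
import Mathlib

section
/- If (n_k) has nested spectrums and V(n_{ν+1}) > V(n_ν), then n_{ν+1} ≥ n_ν + 2^{max Sp(n_ν) + δ_ν} ≥ n_ν + 2^{δ_ν}, where δ_ν = V(n_{ν+1}) - V(n_ν). In particular, n_{ν+1} - n_ν ≥ 2^{V(n_{ν+1}) - V(n_ν)}. -/
open MeasureTheory Filter Set
open scoped Classical

noncomputable section

/-- `eps n j` : the j-th binary digit of `n`, as an integer (0 or 1). -/
def eps (n j : ℕ) : ℤ := if n.testBit j then 1 else 0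

/-- `binVar n` : the binary variation `V(n) = ε₀(n) + Σ_{j≥1} |ε_j(n) - ε_{j-1}(n)|`.
Digits of `n` vanish for positions `> n`, so the sum over `Icc 1 n` captures the full sum. -/
def binVar (n : ℕ) : ℕ :=
  (eps n 0).toNat + ∑ j ∈ Finset.Icc 1 n, (eps n j - eps n (j - 1)).natAbs

/-- The binary spectrum of `n` : positions of the 1's in the binary expansion. -/
def Sp (n : ℕ) : Set ℕ := {j | n.testBit j}

/-- `max Sp(n)` : for `n ≥ 1` this is the position of the highest set bit. -/
def maxSp (n : ℕ) : ℕ := Nat.log 2 n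

/-- A sequence has nested spectrums if `Sp(n_{k+1}) ∩ [0, max Sp(n_k)] = Sp(n_k)` for all k. -/
def HasNestedSpectrums (a : ℕ → ℕ) : Prop :=
  ∀ k, Sp (a (k + 1)) ∩ Set.Iic (maxSp (a k)) = Sp (a k)

/-- A sequence has unbounded variation if `sup_k V(n_k) = ∞`. -/
def UnboundedVariation (a : ℕ → ℕ) : Prop := ∀ M : ℕ, ∃ k, M < binVar (a k)

/-- The Rademacher function `r_j(x) = r(2^j x)` where `r` is 1-periodic, equal to 1 on
`[0,1/2)` and to -1 on `[1/2,1)`. -/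
def rad (j : ℕ) (x : ℝ) : ℝ := if Int.fract ((2 : ℝ) ^ j * x) < 1 / 2 then 1 else -1

/-- The Walsh function `w_n = ∏_j r_j ^ ε_j(n)`. -/
def walsh (n : ℕ) (x : ℝ) : ℝ :=
  ∏ j ∈ Finset.range (n + 1), if n.testBit j then rad j x else 1

/-- Walsh-Fourier coefficient `f̂(k) = ∫_{[0,1)} f · w_k`. -/
def whcoef (f : ℝ → ℝ) (k : ℕ) : ℝ := ∫ x in Set.Ico (0 : ℝ) 1, f x * walsh k x

/-- Partial Walsh-Fourier sum `S_m(f) = Σ_{k<m} f̂(k) w_k`. -/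
def walshSum (m : ℕ) (f : ℝ → ℝ) (x : ℝ) : ℝ :=
  ∑ k ∈ Finset.range m, whcoef f k * walsh k x

/-- The specific sequence `n_k = Σ_{j=0}^k 2^{2j}` (indexed from 0). -/
def nkSeq (k : ℕ) : ℕ := ∑ j ∈ Finset.range (k + 1), 2 ^ (2 * j)

/-- `phiSeq a φ` states that `φ` is the function `φ_{(n_k)}` associated to the sequence `a`
(indexed from 0, so `a 0` plays the role of `n_1`): `φ(0)=0`,
`φ(2^{2n_ν}) = 2^{2n_ν} V(n_ν)`, `φ` linear on `[0, 2^{2n_1}]` and on each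
`[2^{2n_ν}, 2^{2n_{ν+1}}]`. -/
def phiSeq (a : ℕ → ℕ) (φ : ℝ → ℝ) : Prop :=
  φ 0 = 0 ∧
  (∀ ν : ℕ, φ (2 ^ (2 * a ν)) = 2 ^ (2 * a ν) * binVar (a ν)) ∧
  (∃ p q : ℝ, ∀ x ∈ Set.Icc (0 : ℝ) (2 ^ (2 * a 0)), φ x = p * x + q) ∧
  (∀ ν : ℕ, ∃ p q : ℝ,
    ∀ x ∈ Set.Icc ((2 : ℝ) ^ (2 * a ν)) (2 ^ (2 * a (ν + 1))), φ x = p * x + q)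

/-- The Δ₂-condition. -/
def Delta2 (φ : ℝ → ℝ) : Prop := ∃ c > (0 : ℝ), ∃ u₀ > (0 : ℝ), ∀ u ≥ u₀, φ (2 * u) ≤ c * φ u

end

namespace NG

def bv (N n : ℕ) : ℕ := ∑ j ∈ Finset.range N, (eps n (j+1) - eps n j).natAbs

lemma eps_zero_of_le {n j : ℕ} (h : n ≤ j) : eps n j = 0 := by
  unfold eps
  rw [Nat.testBit_lt_two_pow (lt_of_le_of_lt (by omega : n ≤ j) (Nat.lt_two_pow_self (n := j)))]
  simp

lemma eps_toNat_le_one (n j : ℕ) : (eps n j).toNat ≤ 1 := by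
  unfold eps; split <;> simp

lemma binVar_eq_bv (n : ℕ) : binVar n = (eps n 0).toNat + bv n n := by
  unfold binVar bv
  congr 1
  rw [← Finset.Ico_add_one_right_eq_Icc, Finset.sum_Ico_eq_sum_range]
  apply Finset.sum_congr (by congr 1)
  intro j _
  rw [Nat.add_comm 1 j, Nat.add_sub_cancel]

lemma bv_stable {n N N' : ℕ} (h1 : n ≤ N) (h2 : N ≤ N') : bv N n = bv N' n := by
  unfold bv
  apply Finset.sum_subset (Finset.range_subset_range.mpr h2)
  intro j hj hj'
  simp only [Finset.mem_range] at hj hj'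
  rw [eps_zero_of_le (by omega), eps_zero_of_le (by omega)]
  simp

lemma eps_natAbs_eq_toNat (n j : ℕ) : (eps n j).natAbs = (eps n j).toNat := by
  unfold eps; split <;> simp

lemma eps_two_mul_zero (t : ℕ) : eps (2 * t) 0 = 0 := by
  unfold eps; rw [Nat.testBit_zero]; simp [Nat.mul_mod_right]

lemma eps_two_mul_add_one_zero (t : ℕ) : eps (2 * t + 1) 0 = 1 := by
  unfold eps; rw [Nat.testBit_zero]
  have : (2 * t + 1) % 2 = 1 := by omega
  simp [this]

lemma eps_two_mul_succ (t j : ℕ) : eps (2 * t) (j + 1) = eps t j := by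
  unfold eps
  rw [show j + 1 = Nat.succ j from rfl, Nat.testBit_succ,
    show 2 * t / 2 = t by omega]

lemma eps_two_mul_add_one_succ (t j : ℕ) : eps (2 * t + 1) (j + 1) = eps t j := by
  unfold eps
  rw [show j + 1 = Nat.succ j from rfl, Nat.testBit_succ,
    show (2 * t + 1) / 2 = t by omega]

lemma bv_succ_even (t N : ℕ) : bv (N+1) (2*t) = (eps t 0).toNat + bv N t := by
  unfold bv
  rw [Finset.sum_range_succ' (fun j => (eps (2*t) (j+1) - eps (2*t) j).natAbs)]
  rw [eps_two_mul_zero, eps_two_mul_succ]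
  rw [add_comm]
  congr 1
  · simp [eps_natAbs_eq_toNat]
  · apply Finset.sum_congr rfl
    intro j _
    rw [eps_two_mul_succ, eps_two_mul_succ]

lemma bv_succ_odd (t N : ℕ) : bv (N+1) (2*t+1) = (eps t 0 - 1).natAbs + bv N t := by
  unfold bv
  rw [Finset.sum_range_succ' (fun j => (eps (2*t+1) (j+1) - eps (2*t+1) j).natAbs)]
  rw [eps_two_mul_add_one_zero, eps_two_mul_add_one_succ]
  rw [add_comm]
  congr 1
  apply Finset.sum_congr rfl
  intro j _
  rw [eps_two_mul_add_one_succ, eps_two_mul_add_one_succ]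

lemma binVar_zero : binVar 0 = 0 := by decide

lemma binVar_one : binVar 1 = 2 := by decide

lemma binVar_two_mul (t : ℕ) (ht : 1 ≤ t) : binVar (2 * t) = binVar t := by
  rw [binVar_eq_bv (2*t), binVar_eq_bv t, eps_two_mul_zero]
  have h1 : 2 * t = (2 * t - 1) + 1 := by omega
  rw [show bv (2*t) (2*t) = bv (2*t-1+1) (2*t) by rw [← h1]]
  rw [bv_succ_even, bv_stable (le_refl t) (by omega : t ≤ 2*t-1)]
  simp

lemma binVar_two_mul_add_one (t : ℕ) :
    binVar (2 * t + 1) + 2 * (eps t 0).toNat = binVar t + 2 := by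
  rw [binVar_eq_bv (2*t+1), binVar_eq_bv t, eps_two_mul_add_one_zero]
  rw [bv_succ_odd, bv_stable (le_refl t) (by omega : t ≤ 2*t)]
  unfold eps
  rcases h : t.testBit 0 <;> simp <;> omega

lemma log2_two_mul {m : ℕ} (hm : 1 ≤ m) : Nat.log 2 (2 * m) = Nat.log 2 m + 1 := by
  rw [mul_comm, Nat.log_mul_base (by norm_num) (by omega)]

lemma log2_two_mul_add_one {m : ℕ} (hm : 1 ≤ m) :
    Nat.log 2 (2 * m + 1) = Nat.log 2 m + 1 := by
  apply Nat.log_eq_of_pow_le_of_lt_pow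
  · calc 2 ^ (Nat.log 2 m + 1) = 2 * 2 ^ Nat.log 2 m := by ring
    _ ≤ 2 * m := by
        have := Nat.pow_log_le_self 2 (by omega : m ≠ 0); omega
    _ ≤ 2 * m + 1 := by omega
  · have h := Nat.lt_pow_succ_log_self (by norm_num : 1 < 2) m
    calc 2 * m + 1 < 2 * 2 ^ (Nat.log 2 m + 1) := by omega
    _ = 2 ^ (Nat.log 2 m + 1 + 1) := by ring

/-- Core bound: `V(t) ≤ log₂ t + 1 + ε₀(t)`. -/
lemma binVar_le_log (t : ℕ) (ht : 1 ≤ t) :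
    binVar t ≤ Nat.log 2 t + 1 + (eps t 0).toNat := by
  induction t using Nat.strong_induction_on with
  | _ t ih =>
    rcases eq_or_lt_of_le ht with h1 | h2
    · rw [← h1, binVar_one]
      have : eps 1 0 = 1 := by decide
      rw [this, Nat.log_one_right]
      norm_num
    · -- t ≥ 2
      rcases Nat.even_or_odd t with he | ho
      · obtain ⟨s, hs⟩ := he
        have hm2 : t = 2 * s := by omega
        have hs1 : 1 ≤ s := by omega
        have hih := ih s (by omega) hs1
        have hb := eps_toNat_le_one s 0
        rw [hm2, binVar_two_mul s hs1, log2_two_mul hs1, eps_two_mul_zero]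
        simp only [Int.toNat_zero]
        omega
      · obtain ⟨s, hs⟩ := ho
        have hs1 : 1 ≤ s := by omega
        have hih := ih s (by omega) hs1
        have hrec := binVar_two_mul_add_one s
        have hmono : Nat.log 2 (2 * s) ≤ Nat.log 2 (2 * s + 1) := Nat.log_mono_right (by omega)
        rw [log2_two_mul hs1] at hmono
        rw [hs, log2_two_mul_add_one hs1, eps_two_mul_add_one_zero]
        simp only [Int.toNat_one]
        omega

/-- Splitting lemma. -/
lemma binVar_split (t : ℕ) (ht : 1 ≤ t) (m : ℕ) (hm : 1 ≤ m) :
    binVar (m + 2 ^ (Nat.log 2 m + 1) * t) + 2 * (eps t 0).toNat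
      = binVar m + binVar t := by
  induction m using Nat.strong_induction_on with
  | _ m ih =>
    rcases eq_or_lt_of_le hm with h1 | h2
    · rw [← h1]
      have harg : 1 + 2 ^ (Nat.log 2 1 + 1) * t = 2 * t + 1 := by
        rw [Nat.log_one_right]; omega
      rw [harg, binVar_two_mul_add_one, binVar_one]
      omega
    · rcases Nat.even_or_odd m with he | ho
      · obtain ⟨s, hs⟩ := he
        have hm2 : m = 2 * s := by omega
        have hs1 : 1 ≤ s := by omega
        have harg : m + 2 ^ (Nat.log 2 m + 1) * t
            = 2 * (s + 2 ^ (Nat.log 2 s + 1) * t) := by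
          rw [hm2, log2_two_mul hs1]; ring
        have hih := ih s (by omega) hs1
        rw [harg, binVar_two_mul _ (le_add_right hs1), hm2, binVar_two_mul s hs1, hih]
      · obtain ⟨s, hs⟩ := ho
        have hm2 : m = 2 * s + 1 := hs
        have hs1 : 1 ≤ s := by omega
        set u := s + 2 ^ (Nat.log 2 s + 1) * t with hu
        have harg : m + 2 ^ (Nat.log 2 m + 1) * t = 2 * u + 1 := by
          rw [hm2, log2_two_mul_add_one hs1, hu]; ring
        have heps : eps u 0 = eps s 0 := by
          unfold eps
          rw [Nat.testBit_zero, Nat.testBit_zero]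
          have h5 : u = s + 2 * (2 ^ Nat.log 2 s * t) := by rw [hu]; ring
          have : u % 2 = s % 2 := by omega
          rw [this]
        have h1 := binVar_two_mul_add_one u
        rw [← harg, heps] at h1
        have h3 := binVar_two_mul_add_one s
        rw [← hm2] at h3
        have hih := ih s (by omega) hs1
        rw [← hu] at hih
        omega

end NG

theorem nested_gap_estimate (a : ℕ → ℕ) (ha : StrictMono a) (hpos : ∀ k, 1 ≤ a k)
    (hnest : HasNestedSpectrums a) (ν : ℕ)
    (h : binVar (a ν) < binVar (a (ν + 1))) :
    a ν + 2 ^ (maxSp (a ν) + (binVar (a (ν + 1)) - binVar (a ν))) ≤ a (ν + 1) ∧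
    a ν + 2 ^ (binVar (a (ν + 1)) - binVar (a ν)) ≤ a (ν + 1) := by
  set m := a ν with hmdef
  set n := a (ν + 1) with hndef
  set M := Nat.log 2 m with hMdef
  have hm1 : 1 ≤ m := hpos ν
  have hmn : m < n := ha (Nat.lt_succ_self ν)
  have hspec := hnest ν
  have hbits : ∀ j, j ≤ M → n.testBit j = m.testBit j := by
    intro j hj
    have hx := Set.ext_iff.mp hspec j
    simp only [Sp, Set.mem_inter_iff, Set.mem_setOf_eq, Set.mem_Iic, maxSp] at hx
    rw [← hndef, ← hmdef, ← hMdef] at hx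
    rcases h1 : n.testBit j <;> rcases h2 : m.testBit j <;> simp [h1, h2, hj] at hx ⊢
  have hmlt : m < 2 ^ (M + 1) := Nat.lt_pow_succ_log_self (by norm_num) m
  have hmod : n % 2 ^ (M + 1) = m := by
    apply Nat.eq_of_testBit_eq
    intro j
    rw [Nat.testBit_mod_two_pow]
    by_cases hj : j < M + 1
    · simp [hj, hbits j (by omega)]
    · have hfalse : m.testBit j = false := Nat.testBit_lt_two_pow
        (lt_of_lt_of_le hmlt (Nat.pow_le_pow_right (by norm_num) (by omega)))
      simp [hj, hfalse]
  set t := n / 2 ^ (M + 1) with htdef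
  have hdm : 2 ^ (M + 1) * t + n % 2 ^ (M + 1) = n := Nat.div_add_mod n (2 ^ (M + 1))
  have hn : n = m + 2 ^ (M + 1) * t := by omega
  have ht : 1 ≤ t := by
    rcases Nat.eq_zero_or_pos t with h0 | h0
    · rw [h0] at hn; omega
    · exact h0
  have hsplit := NG.binVar_split t ht m hm1
  rw [← hMdef, ← hn] at hsplit
  have hle := NG.binVar_le_log t ht
  have hb := NG.eps_toNat_le_one t 0
  set δ := binVar n - binVar m with hδ
  have hδ1 : 1 ≤ δ := by omega
  have hδlog : δ - 1 ≤ Nat.log 2 t := by omega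
  have hpowt : 2 ^ (δ - 1) ≤ t :=
    le_trans (Nat.pow_le_pow_right (by norm_num) hδlog)
      (Nat.pow_log_le_self 2 (by omega))
  have hmain : m + 2 ^ (M + δ) ≤ n := by
    rw [show M + δ = (M + 1) + (δ - 1) by omega, pow_add, hn]
    have := Nat.mul_le_mul_left (2 ^ (M + 1)) hpowt
    omega
  constructor
  · exact hmain
  · exact le_trans (by
      have : (2:ℕ) ^ δ ≤ 2 ^ (M + δ) := Nat.pow_le_pow_right (by norm_num) (by omega)
      omega) hmain
end

section
/- For the sequence n_k = Σ_{j=0}^k 2^{2j}, the function φ_{(n_k)} satisfies c·u·log₂ log₂ u ≤ φ_{(n_k)}(u) ≤ C·u·log₂ log₂ u for all u ≥ 8, where c, C > 0 are absolute constants. -/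
open MeasureTheory Filter Set
open scoped Classical

lemma nkSeq_succ (k : ℕ) : nkSeq (k+1) = 2^(2*(k+1)) + nkSeq k := by
  simp [nkSeq, Finset.sum_range_succ]; ring

lemma nkSeq_ge (k : ℕ) : 2^(2*k) ≤ nkSeq k := by
  cases k with
  | zero => simp [nkSeq]
  | succ n => rw [nkSeq_succ]; omega

lemma nkSeq_le (k : ℕ) : nkSeq k ≤ 2^(2*k+1) := by
  induction k with
  | zero => simp [nkSeq]
  | succ n ih =>
      rw [nkSeq_succ]
      have h1 : (2:ℕ)^(2*(n+1)) + 2^(2*n+1) ≤ 2^(2*(n+1)+1) := by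
        have : 2*(n+1) = 2*n+2 := by ring
        rw [this]
        have e2 : (2:ℕ)^(2*n+2) = 2^(2*n+1) * 2 := by ring
        have e3 : (2:ℕ)^(2*n+3) = 2^(2*n+1) * 4 := by ring
        omega
      omega

lemma nkSeq_lt (k : ℕ) : nkSeq k < 2^(2*(k+1)) := by
  have := nkSeq_le k
  have h : (2:ℕ)^(2*k+1) < 2^(2*(k+1)) := by
    apply Nat.pow_lt_pow_right (by norm_num); omega
  omega

lemma testBit_nkSeq (k i : ℕ) : (nkSeq k).testBit i ↔ (i % 2 = 0 ∧ i ≤ 2*k) := by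
  induction k generalizing i with
  | zero =>
      have : nkSeq 0 = 1 := by simp [nkSeq]
      rw [this]
      rcases Nat.eq_zero_or_pos i with h | h
      · subst h; simp
      · rw [Nat.testBit_one_eq_true_iff_self_eq_zero]; omega
  | succ n ih =>
      rw [nkSeq_succ]
      rcases lt_trichotomy i (2*(n+1)) with h | h | h
      · rw [Nat.testBit_two_pow_add_gt h, ih]
        constructor
        · rintro ⟨h1, h2⟩; exact ⟨h1, by omega⟩
        · rintro ⟨h1, h2⟩; exact ⟨h1, by omega⟩
      · subst h
        rw [Nat.testBit_two_pow_add_eq]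
        have : (nkSeq n).testBit (2*(n+1)) = false := by
          apply Nat.testBit_lt_two_pow (nkSeq_lt n)
        simp [this, Nat.mul_mod_right]
      · have hlt : 2^(2*(n+1)) + nkSeq n < 2^i := by
          have h1 : (2:ℕ)^(2*(n+1)) + nkSeq n < 2^(2*(n+1)+1) := by
            have := nkSeq_lt n
            have e : (2:ℕ)^(2*(n+1)+1) = 2^(2*(n+1)) * 2 := by ring
            omega
          have h2 : (2:ℕ)^(2*(n+1)+1) ≤ 2^i := Nat.pow_le_pow_right (by norm_num) (by omega)
          omega
        rw [Nat.testBit_lt_two_pow hlt]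
        simp; omega

lemma eps_nkSeq (k j : ℕ) : eps (nkSeq k) j = if j % 2 = 0 ∧ j ≤ 2*k then 1 else 0 := by
  unfold eps
  by_cases h : (nkSeq k).testBit j
  · rw [if_pos h, if_pos ((testBit_nkSeq k j).mp h)]
  · rw [if_neg h, if_neg (fun hc => h ((testBit_nkSeq k j).mpr hc))]

lemma two_k_le (k : ℕ) : 2*k+1 ≤ 2^(2*k) := by
  induction k with
  | zero => simp
  | succ n ih =>
      have : (2:ℕ)^(2*(n+1)) = 2^(2*n)*4 := by ring
      omega

lemma binVar_nkSeq (k : ℕ) : binVar (nkSeq k) = 2*k + 2 := by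
  unfold binVar
  have h0 : (eps (nkSeq k) 0).toNat = 1 := by
    rw [eps_nkSeq]; simp
  have hstep : ∀ j ∈ Finset.Icc 1 (nkSeq k),
      (eps (nkSeq k) j - eps (nkSeq k) (j-1)).natAbs = if j ≤ 2*k+1 then 1 else 0 := by
    intro j hj
    simp only [Finset.mem_Icc] at hj
    rw [eps_nkSeq, eps_nkSeq]
    rcases Nat.even_or_odd j with he | ho
    · have hj2 : j % 2 = 0 := Nat.even_iff.mp he
      have hj1 : (j-1) % 2 = 1 := by omega
      by_cases hle : j ≤ 2*k
      · rw [if_pos ⟨hj2, hle⟩, if_neg (by omega), if_pos (by omega)]; simp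
      · rw [if_neg (by omega), if_neg (by omega), if_neg (by omega)]; simp
    · have hj2 : j % 2 = 1 := Nat.odd_iff.mp ho
      have hj1 : (j-1) % 2 = 0 := by omega
      by_cases hle : j - 1 ≤ 2*k
      · rw [if_neg (by omega), if_pos ⟨hj1, hle⟩, if_pos (by omega)]; simp
      · rw [if_neg (by omega), if_neg (by omega), if_neg (by omega)]; simp
  rw [Finset.sum_congr rfl hstep, h0]
  have hsub : Finset.Icc 1 (2*k+1) ⊆ Finset.Icc 1 (nkSeq k) := by
    intro x hx
    simp only [Finset.mem_Icc] at *
    have h1 : 2^(2*k) ≤ nkSeq k := nkSeq_ge k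
    have h2 : 2*k+1 ≤ 2^(2*k) := two_k_le k
    omega
  rw [← Finset.sum_subset hsub (by intro x hx hx2; simp only [Finset.mem_Icc] at *; rw [if_neg]; omega)]
  have : ∀ j ∈ Finset.Icc 1 (2*k+1), (if j ≤ 2*k+1 then (1:ℕ) else 0) = 1 := by
    intro j hj; simp only [Finset.mem_Icc] at hj; rw [if_pos hj.2]
  rw [Finset.sum_congr rfl this, Finset.sum_const, Nat.Icc_eq_range']
  simp
  omega
theorem phiSeq_nkSeq_loglog_equiv (φ : ℝ → ℝ) (hφ : phiSeq nkSeq φ) :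
    ∃ c C : ℝ, 0 < c ∧ 0 < C ∧ ∀ u : ℝ, 8 ≤ u →
      c * u * Real.logb 2 (Real.logb 2 u) ≤ φ u ∧
      φ u ≤ C * u * Real.logb 2 (Real.logb 2 u) := by
  obtain ⟨hφ0, hval, hlin0, hlin⟩ := hφ
  have hll : ∀ m : ℕ, Real.logb 2 ((2:ℝ)^m) = m := fun m => by
    rw [Real.logb_pow]; simp [Real.logb_self_eq_one]
  refine ⟨1/2, 4, by norm_num, by norm_num, fun u hu => ?_⟩
  have hu0 : (0:ℝ) < u := by linarith
  have hex : ∃ m : ℕ, u < (2:ℝ) ^ (2 * nkSeq (m+1)) := by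
    obtain ⟨m, hm⟩ := pow_unbounded_of_one_lt u (one_lt_two (α := ℝ))
    refine ⟨m, lt_of_lt_of_le hm (pow_le_pow_right₀ one_le_two ?_)⟩
    have h1 : 2*m+1 ≤ 2^(2*m) := two_k_le m
    have h2 : (2:ℕ)^(2*m) ≤ 2^(2*(m+1)) := Nat.pow_le_pow_right (by norm_num) (by omega)
    have h3 : 2^(2*(m+1)) ≤ nkSeq (m+1) := nkSeq_ge (m+1)
    omega
  set ν := Nat.find hex with hνdef
  have h1 : u < (2:ℝ) ^ (2 * nkSeq (ν+1)) := Nat.find_spec hex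
  have h2 : (2:ℝ) ^ (2 * nkSeq ν) ≤ u := by
    rcases Nat.eq_zero_or_pos ν with h0 | hpos
    · rw [h0]
      have hn0 : nkSeq 0 = 1 := by simp [nkSeq]
      rw [hn0]; norm_num; linarith
    · have hmin := Nat.find_min hex (show ν - 1 < ν by omega)
      have heq : ν - 1 + 1 = ν := by omega
      rw [heq] at hmin
      linarith [not_lt.mp hmin]
  obtain ⟨p, q, hpq⟩ := hlin ν
  set A : ℝ := (2:ℝ) ^ (2 * nkSeq ν) with hA
  set B : ℝ := (2:ℝ) ^ (2 * nkSeq (ν+1)) with hB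
  have hApos : (0:ℝ) < A := by positivity
  have hBpos : (0:ℝ) < B := by positivity
  have hAB : A < B := by
    apply pow_lt_pow_right₀ one_lt_two
    have := nkSeq_succ ν
    have h4 : 0 < (2:ℕ)^(2*(ν+1)) := Nat.pow_pos (by norm_num)
    omega
  have hφu : φ u = p * u + q := hpq u ⟨h2, h1.le⟩
  have e1 : p * A + q = A * (2*(ν:ℝ)+2) := by
    have h := hpq A ⟨le_refl _, hAB.le⟩
    have hv := hval ν
    rw [binVar_nkSeq] at hv
    rw [← hA] at hv
    rw [h] at hv
    push_cast at hv
    linarith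
  have e2 : p * B + q = B * (2*(ν:ℝ)+4) := by
    have h := hpq B ⟨hAB.le, le_refl _⟩
    have hv := hval (ν+1)
    rw [binVar_nkSeq] at hv
    rw [← hB] at hv
    rw [h] at hv
    push_cast at hv
    linarith
  have hpb : (2*(ν:ℝ)+4) ≤ p := by
    nlinarith [mul_pos (sub_pos.2 hAB) hBpos, hApos]
  have lb : (2*(ν:ℝ)+2) * u ≤ φ u := by
    rw [hφu]
    have hpa : (2*(ν:ℝ)+2) ≤ p := by linarith
    nlinarith [mul_nonneg (sub_nonneg.2 hpa) (sub_nonneg.2 h2)]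
  have ub : φ u ≤ (2*(ν:ℝ)+4) * u := by
    rw [hφu]
    nlinarith [mul_nonneg (sub_nonneg.2 hpb) (sub_nonneg.2 h1.le)]
  have hlogA : ((2 * nkSeq ν : ℕ) : ℝ) ≤ Real.logb 2 u := by
    have h := Real.logb_le_logb_of_le one_lt_two hApos h2
    rwa [hA, hll] at h
  have hlogB : Real.logb 2 u ≤ ((2 * nkSeq (ν+1) : ℕ) : ℝ) := by
    have h := Real.logb_le_logb_of_le one_lt_two hu0 h1.le
    rwa [hB, hll] at h
  have hNν : (2:ℝ)^(2*ν+1) ≤ ((2 * nkSeq ν : ℕ) : ℝ) := by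
    have hg := nkSeq_ge ν
    have h : (2:ℕ)^(2*ν+1) ≤ 2 * nkSeq ν := by
      have e : (2:ℕ)^(2*ν+1) = 2^(2*ν) * 2 := by ring
      omega
    exact_mod_cast h
  have hNν1 : ((2 * nkSeq (ν+1) : ℕ) : ℝ) ≤ (2:ℝ)^(2*ν+4) := by
    have hg := nkSeq_le (ν+1)
    have h : 2 * nkSeq (ν+1) ≤ (2:ℕ)^(2*ν+4) := by
      have e : (2:ℕ)^(2*ν+4) = 2^(2*(ν+1)+1) * 2 := by ring
      omega
    exact_mod_cast h
  have hlogu_pos : (0:ℝ) < Real.logb 2 u :=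
    lt_of_lt_of_le (pow_pos two_pos _) (le_trans hNν hlogA)
  have hL_lb : (2*(ν:ℝ)+1) ≤ Real.logb 2 (Real.logb 2 u) := by
    have h := Real.logb_le_logb_of_le one_lt_two (pow_pos two_pos (2*ν+1))
      (le_trans hNν hlogA)
    rw [hll] at h
    push_cast at h
    linarith
  have hL_ub : Real.logb 2 (Real.logb 2 u) ≤ (2*(ν:ℝ)+4) := by
    have h := Real.logb_le_logb_of_le one_lt_two hlogu_pos (le_trans hlogB hNν1)
    rw [hll] at h
    push_cast at h
    linarith
  have hν0 : (0:ℝ) ≤ (ν:ℝ) := Nat.cast_nonneg ν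
  constructor
  · nlinarith [lb, mul_le_mul_of_nonneg_left hL_ub hu0.le,
      mul_nonneg hu0.le hν0]
  · nlinarith [ub, mul_le_mul_of_nonneg_left hL_lb hu0.le,
      mul_nonneg hu0.le hν0]
end

section
/- Let α: [0,∞) → [0,∞) be an increasing convex function with α(u)/u → ∞ satisfying the Δ₂-condition, and let β: [0,∞) → [0,∞) satisfy β(u) = o(α(u)) as u → ∞. Then there exists γ: [0,∞) → [0,∞) such that: (1) γ(0) = 0 and γ is increasing and convex; (2) γ(u)/u → ∞ as u → ∞; (3) γ satisfies the Δ₂-condition; (4) γ(u) ≥ β(u) for all sufficiently large u; (5) γ(u) = o(α(u)) as u → ∞. -/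
open MeasureTheory Filter Set
open scoped Classical

private lemma secant_upper {f : ℝ → ℝ} (hf : ConvexOn ℝ (Set.Ici 0) f)
    {p q x : ℝ} (hp : 0 ≤ p) (hpq : p < q) (h1 : p ≤ x) (h2 : x ≤ q) :
    f x ≤ f p + (f q - f p) / (q - p) * (x - p) := by
  rcases eq_or_lt_of_le h1 with rfl | h1
  · simp
  have hkey := hf.secant_mono (a := p) (x := x) (y := q)
    hp (le_trans hp h1.le) (le_trans hp hpq.le) (by intro h; linarith [h ▸ h1])
    (by intro h; linarith [h ▸ hpq]) h2
  rw [div_le_div_iff₀ (by linarith) (by linarith)] at hkey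
  have h3 : f x - f p ≤ (f q - f p) / (q - p) * (x - p) := by
    rw [div_mul_eq_mul_div, le_div_iff₀ (by linarith : (0:ℝ) < q - p)]
    nlinarith
  linarith

private lemma secant_lower_right {f : ℝ → ℝ} (hf : ConvexOn ℝ (Set.Ici 0) f)
    {p q x : ℝ} (hp : 0 ≤ p) (hpq : p < q) (h2 : q ≤ x) :
    f p + (f q - f p) / (q - p) * (x - p) ≤ f x := by
  have hkey := hf.secant_mono (a := p) (x := q) (y := x)
    hp (le_trans hp hpq.le) (le_trans hp (by linarith)) (by intro h; linarith [h ▸ hpq])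
    (by intro h; linarith [h ▸ hpq, h ▸ h2]) h2
  rw [div_le_div_iff₀ (by linarith) (by linarith)] at hkey
  have h3 : (f q - f p) / (q - p) * (x - p) ≤ f x - f p := by
    rw [div_mul_eq_mul_div, div_le_iff₀ (by linarith : (0:ℝ) < q - p)]
    nlinarith
  linarith

private lemma secant_lower_left {f : ℝ → ℝ} (hf : ConvexOn ℝ (Set.Ici 0) f)
    {p q x : ℝ} (hx : 0 ≤ x) (hp : 0 ≤ p) (hpq : p < q) (h2 : x ≤ p) :
    f p + (f q - f p) / (q - p) * (x - p) ≤ f x := by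
  rcases eq_or_lt_of_le h2 with rfl | h2
  · simp
  have hkey := hf.secant_mono (a := p) (x := x) (y := q)
    hp hx (le_trans hp hpq.le) (by intro h; linarith [h ▸ h2]) (by intro h; linarith [h ▸ hpq])
    (by linarith)
  rw [div_le_iff_of_neg (by linarith : x - p < 0)] at hkey
  linarith

set_option maxHeartbeats 2000000

theorem exists_gamma_between (α β : ℝ → ℝ)
    (hα0 : ∀ u, 0 ≤ u → 0 ≤ α u)
    (hαmono : StrictMonoOn α (Set.Ici 0))
    (hαconv : ConvexOn ℝ (Set.Ici 0) α)
    (hαinf : Filter.Tendsto (fun u => α u / u) Filter.atTop Filter.atTop)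
    (hαΔ : Delta2 α)
    (hβ0 : ∀ u, 0 ≤ u → 0 ≤ β u)
    (hβα : Filter.Tendsto (fun u => β u / α u) Filter.atTop (nhds 0)) :
    ∃ γ : ℝ → ℝ,
      γ 0 = 0 ∧ StrictMonoOn γ (Set.Ici 0) ∧ ConvexOn ℝ (Set.Ici 0) γ ∧
      (∀ u, 0 ≤ u → 0 ≤ γ u) ∧
      Filter.Tendsto (fun u => γ u / u) Filter.atTop Filter.atTop ∧
      Delta2 γ ∧
      (∃ u₀ : ℝ, 0 < u₀ ∧ ∀ u ≥ u₀, β u ≤ γ u) ∧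
      Filter.Tendsto (fun u => γ u / α u) Filter.atTop (nhds 0) := by
  classical
  obtain ⟨c, hc, u₀, hu₀, hΔ⟩ := hαΔ
  have hA0 : 0 ≤ α 0 := hα0 0 le_rfl
  set A := α 0 with hAdef
  set f : ℝ → ℝ := fun u => α u - A with hfdef
  have hfconv : ConvexOn ℝ (Set.Ici 0) f := by
    have h := hαconv.add_const (-A)
    refine ⟨h.1, fun x hx y hy a b ha hb hab => ?_⟩
    have := h.2 hx hy ha hb hab
    simp only [hfdef, Pi.add_apply, smul_eq_mul] at this ⊢
    linarith
  have hfmono : ∀ x y : ℝ, 0 ≤ x → x < y → f x < f y := by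
    intro x y hx hxy
    have := hαmono hx (le_trans hx hxy.le) hxy
    simp only [hfdef]; linarith
  have hf0 : f 0 = 0 := by simp [hfdef, hAdef]
  have hfpos : ∀ u : ℝ, 0 < u → 0 < f u := by
    intro u hu
    have := hfmono 0 u le_rfl hu
    rwa [hf0] at this
  have hfnn : ∀ u : ℝ, 0 ≤ u → 0 ≤ f u := by
    intro u hu
    rcases eq_or_lt_of_le hu with rfl | hu
    · exact hf0.ge
    · exact (hfpos u hu).le
  have hfm : ∀ x y : ℝ, 0 ≤ x → x ≤ y → f x ≤ f y := by
    intro x y hx hxy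
    rcases eq_or_lt_of_le hxy with rfl | h
    · exact le_rfl
    · exact (hfmono x y hx h).le
  have hratio : ∀ x y : ℝ, 0 < x → x ≤ y → f x / x ≤ f y / y := by
    intro x y hx hxy
    have := hfconv.secant_mono (a := 0) (x := x) (y := y)
      Set.self_mem_Ici hx.le (le_trans hx.le hxy) (by intro h; linarith [h ▸ hx])
      (by intro h; nlinarith [h ▸ hx]) hxy
    simpa [hf0] using this
  have hαtop : Tendsto α atTop atTop := by
    apply tendsto_atTop_mono' atTop ?_ tendsto_id
    filter_upwards [hαinf.eventually_ge_atTop 1, eventually_ge_atTop (1:ℝ)] with u h1 h2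
    have hu : (0:ℝ) < u := by linarith
    have := (le_div_iff₀ hu).1 h1
    simpa using this
  have hftop : Tendsto f atTop atTop := by
    simpa [hfdef, sub_eq_add_neg] using tendsto_atTop_add_const_right atTop (-A) hαtop
  have hfdiv : Tendsto (fun u => f u / u) atTop atTop := by
    apply tendsto_atTop_mono' atTop ?_ (tendsto_atTop_add_const_right atTop (-A) hαinf)
    filter_upwards [eventually_ge_atTop (1:ℝ)] with u hu
    have hupos : (0:ℝ) < u := by linarith
    have h1 : A / u ≤ A := by rw [div_le_iff₀ hupos]; nlinarith
    have h2 : f u / u = α u / u - A / u := by rw [hfdef]; ring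
    rw [h2]; linarith
  have hβf : Tendsto (fun u => β u / f u) atTop (nhds 0) := by
    have h1 : Tendsto (fun u => A * (f u)⁻¹) atTop (nhds 0) := by
      simpa using (tendsto_inv_atTop_zero.comp hftop).const_mul A
    have h2 : Tendsto (fun u => 1 + A * (f u)⁻¹) atTop (nhds (1:ℝ)) := by
      simpa using tendsto_const_nhds.add h1
    have hαf : Tendsto (fun u => α u / f u) atTop (nhds 1) := by
      apply h2.congr'
      filter_upwards [hftop.eventually_gt_atTop 0] with u hu
      have hαu : α u = f u + A := by simp [hfdef]
      rw [hαu]; field_simp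
    have h3 := hβα.mul hαf
    rw [zero_mul] at h3
    apply h3.congr'
    filter_upwards [hftop.eventually_gt_atTop 0, eventually_gt_atTop (0:ℝ)] with u hfu hu
    have he : α u = f u + A := by simp [hfdef]
    have hαu : 0 < α u := by linarith
    field_simp
  have hc1 : 1 ≤ c := by
    have h1 : α 0 < α u₀ := hαmono Set.self_mem_Ici (mem_Ici.2 hu₀.le) hu₀
    have h2 : α u₀ ≤ α (2*u₀) :=
      (hαmono.monotoneOn) (mem_Ici.2 hu₀.le) (mem_Ici.2 (by linarith)) (by linarith)
    have h3 := hΔ u₀ le_rfl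
    nlinarith
  obtain ⟨t₁, ht₁⟩ := Filter.eventually_atTop.1
    (hβf.eventually (eventually_le_nhds (by norm_num : (0:ℝ) < 1)))
  set s₀ : ℝ := max t₁ (max u₀ 1) with hs₀def
  have hs₀1 : 1 ≤ s₀ := le_trans (le_max_right u₀ 1) (le_max_right _ _)
  have hs₀pos : 0 < s₀ := lt_of_lt_of_le one_pos hs₀1
  have hs₀u₀ : u₀ ≤ s₀ := le_trans (le_max_left u₀ 1) (le_max_right _ _)
  have hs₀t : t₁ ≤ s₀ := le_max_left _ _
  have hfs₀ : 0 < f s₀ := hfpos s₀ hs₀pos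
  -- Δ₂-type bounds for f
  set K4 : ℝ := c^2 + (c^2-1)*A/f s₀ with hK4def
  have hK41 : 1 ≤ K4 := by
    have h : 0 ≤ c^2 - 1 := by nlinarith
    have : 0 ≤ (c^2-1)*A/f s₀ := div_nonneg (mul_nonneg h hA0) hfs₀.le
    rw [hK4def]; nlinarith
  have hK4' : ∀ u, s₀ ≤ u → f (4*u) ≤ K4 * f u := by
    intro u hu
    have hu0 : u₀ ≤ u := le_trans hs₀u₀ hu
    have hupos : 0 < u := lt_of_lt_of_le hs₀pos hu
    have h1 : α (2*u) ≤ c * α u := hΔ u hu0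
    have h1' : α (2*(2*u)) ≤ c * α (2*u) := hΔ (2*u) (by linarith)
    have h2 : f s₀ ≤ f u := hfm s₀ u hs₀pos.le hu
    have hαnn : 0 ≤ α u := hα0 u hupos.le
    have key : f (4*u) * f s₀ ≤ (K4 * f u) * f s₀ := by
      have e : (K4 * f u) * f s₀ = c^2 * f u * f s₀ + (c^2-1)*A*f u := by
        rw [hK4def]; field_simp
      rw [e]
      have e2 : f (4*u) = α (2*(2*u)) - A := by
        have : (4:ℝ)*u = 2*(2*u) := by ring
        rw [hfdef, this]
      have e3 : α u = f u + A := by simp [hfdef]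
      have e4 : α (2*u) = f (2*u) + A := by simp [hfdef]
      rw [e3, e4] at h1
      rw [e4] at h1'
      rw [e2]
      have hcsq : (0:ℝ) ≤ c^2 - 1 := by nlinarith
      nlinarith [mul_le_mul_of_nonneg_left h1 hc.le,
        mul_le_mul_of_nonneg_right h1' hfs₀.le,
        mul_le_mul_of_nonneg_right (mul_le_mul_of_nonneg_left h1 hc.le) hfs₀.le,
        mul_le_mul_of_nonneg_left h2 (mul_nonneg hcsq hA0)]
    exact le_of_mul_le_mul_right key hfs₀
  have hK2' : ∀ u, s₀ ≤ u → f (2*u) ≤ K4 * f u := by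
    intro u hu
    have hupos : 0 < u := lt_of_lt_of_le hs₀pos hu
    have h1 : f (2*u) ≤ f (4*u) := hfm (2*u) (4*u) (by linarith) (by linarith)
    exact le_trans h1 (hK4' u hu)
  -- the dyadic sequence
  set S : ℕ → ℝ := fun j => 2^j * s₀ with hSdef
  have hS0 : S 0 = s₀ := by simp [hSdef]
  have hSsucc : ∀ j, S (j+1) = 2 * S j := by intro j; simp [hSdef]; ring
  have hSpos : ∀ j, 0 < S j := by intro j; simp [hSdef]; positivity
  have hSmono : ∀ i j, i ≤ j → S i ≤ S j := by
    intro i j hij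
    simp only [hSdef]
    have : (2:ℝ)^i ≤ 2^j := pow_le_pow_right₀ (by norm_num) hij
    nlinarith
  have hSs₀ : ∀ j, s₀ ≤ S j := by
    intro j
    have := hSmono 0 j (Nat.zero_le j)
    rwa [hS0] at this
  have hSlt : ∀ j, S j < S (j+1) := by
    intro j; rw [hSsucc j]; nlinarith [hSpos j]
  have hStop : Tendsto S atTop atTop := by
    have h1 : Tendsto (fun j : ℕ => (2:ℝ)^j) atTop atTop :=
      tendsto_pow_atTop_atTop_of_one_lt (by norm_num)
    simpa [hSdef] using h1.atTop_mul_const hs₀pos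
  have hidx : ∀ u, s₀ ≤ u → ∃ j, S j ≤ u ∧ u < S (j+1) := by
    intro u hu
    have hex : ∃ n, u < S (n+1) := by
      obtain ⟨n, hn⟩ := (hStop.eventually_gt_atTop u).exists
      exact ⟨n, lt_of_lt_of_le hn (hSmono n (n+1) (by omega))⟩
    refine ⟨Nat.find hex, ?_, Nat.find_spec hex⟩
    rcases Nat.eq_zero_or_pos (Nat.find hex) with h0 | hpos
    · rw [h0, hS0]; exact hu
    · have hmin := Nat.find_min hex (show Nat.find hex - 1 < Nat.find hex by omega)
      push_neg at hmin
      have : Nat.find hex - 1 + 1 = Nat.find hex := by omega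
      rwa [this] at hmin
  -- coefficients
  set Q : ℝ → ℝ := fun v => β v / f v with hQdef
  have hQ1 : ∀ v, s₀ ≤ v → Q v ≤ 1 := fun v hv => ht₁ v (le_trans hs₀t hv)
  have hQ0 : ∀ v, s₀ ≤ v → 0 ≤ Q v := by
    intro v hv
    have hvpos : 0 < v := lt_of_lt_of_le hs₀pos hv
    exact div_nonneg (hβ0 v hvpos.le) (hfnn v hvpos.le)
  have hQbdd : ∀ j : ℕ, BddAbove (Q '' Set.Ici (S j)) := by
    intro j
    refine ⟨1, ?_⟩
    rintro x ⟨v, hv, rfl⟩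
    exact hQ1 v (le_trans (hSs₀ j) hv)
  set b : ℕ → ℝ := fun j => sSup (Q '' Set.Ici (S j)) with hbdef
  have hbq : ∀ j : ℕ, ∀ v, S j ≤ v → Q v ≤ b j := by
    intro j v hv
    exact le_csSup (hQbdd j) ⟨v, hv, rfl⟩
  have hb0 : ∀ j, 0 ≤ b j := by
    intro j
    exact le_trans (hQ0 (S j) (hSs₀ j)) (hbq j (S j) le_rfl)
  have hbanti : ∀ i j : ℕ, i ≤ j → b j ≤ b i := by
    intro i j hij
    apply csSup_le (Set.nonempty_Ici.image Q)
    rintro x ⟨v, hv, rfl⟩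
    exact le_csSup (hQbdd i) ⟨v, le_trans (hSmono i j hij) hv, rfl⟩
  set d : ℕ → ℝ := fun j => Real.sqrt (S j / f (S j)) with hddef
  have hd0 : ∀ j, 0 < d j := by
    intro j
    apply Real.sqrt_pos.2
    exact div_pos (hSpos j) (hfpos _ (hSpos j))
  have hdanti : ∀ i j : ℕ, i ≤ j → d j ≤ d i := by
    intro i j hij
    apply Real.sqrt_le_sqrt
    have h1 := hratio (S i) (S j) (hSpos i) (hSmono i j hij)
    have hfi := hfpos _ (hSpos i)
    have hfj := hfpos _ (hSpos j)
    rw [div_le_div_iff₀ (hSpos i) (hSpos j)] at h1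
    rw [div_le_div_iff₀ (hfpos _ (hSpos j)) (hfpos _ (hSpos i))]
    nlinarith
  set a : ℕ → ℝ := fun j => max (b j) (d j) with hadef
  have ha0 : ∀ j, 0 < a j := fun j => lt_of_lt_of_le (hd0 j) (le_max_right _ _)
  have hba : ∀ j, b j ≤ a j := fun j => le_max_left _ _
  have haanti : ∀ i j : ℕ, i ≤ j → a j ≤ a i := by
    intro i j hij
    exact max_le (le_trans (hbanti i j hij) (hba i))
      (le_trans (hdanti i j hij) (le_max_right _ _))
  have hasmall : ∀ δ : ℝ, 0 < δ → ∃ I, a I ≤ δ := by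
    intro δ hδ
    obtain ⟨T, hT⟩ := Filter.eventually_atTop.1 (hβf.eventually (eventually_le_nhds hδ))
    obtain ⟨T2, hT2⟩ := Filter.eventually_atTop.1 (hfdiv.eventually_ge_atTop (1/δ^2))
    obtain ⟨I1, hI1⟩ := (hStop.eventually_ge_atTop T).exists
    obtain ⟨I2, hI2⟩ := (hStop.eventually_ge_atTop T2).exists
    refine ⟨max I1 I2, ?_⟩
    have hbI : b (max I1 I2) ≤ δ := by
      refine le_trans (hbanti I1 (max I1 I2) (le_max_left _ _)) ?_
      apply csSup_le (Set.nonempty_Ici.image Q)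
      rintro x ⟨v, hv, rfl⟩
      exact hT v (le_trans hI1 hv)
    have hdI : d (max I1 I2) ≤ δ := by
      refine le_trans (hdanti I2 (max I1 I2) (le_max_right _ _)) ?_
      have hv : 0 < S I2 := hSpos I2
      have hfv : 0 < f (S I2) := hfpos _ hv
      have h := hT2 (S I2) hI2
      rw [le_div_iff₀ hv] at h
      have hle : S I2 / f (S I2) ≤ δ^2 := by
        rw [div_le_iff₀ hfv]
        have hmul := mul_le_mul_of_nonneg_left h (by positivity : (0:ℝ) ≤ δ^2)
        have e : δ^2 * (1/δ^2 * S I2) = S I2 := by field_simp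
        rw [e] at hmul
        linarith
      calc d I2 ≤ Real.sqrt (δ^2) := Real.sqrt_le_sqrt hle
        _ = δ := Real.sqrt_sq hδ.le
    exact max_le hbI hdI
  -- the lines
  set P : ℕ → ℝ := fun j => a j * ((f (S (j+1)) - f (S j)) / (S (j+1) - S j)) with hPdef
  set L : ℕ → ℝ → ℝ := fun j x => a j * f (S j) + P j * (x - S j) with hLdef
  have hP0 : ∀ j, 0 ≤ P j := by
    intro j
    apply mul_nonneg (ha0 j).le
    apply div_nonneg
    · have := hfm (S j) (S (j+1)) (hSpos j).le (hSlt j).le; linarith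
    · linarith [hSlt j]
  have hLform : ∀ j x, L j x
      = a j * (f (S j) + (f (S (j+1)) - f (S j)) / (S (j+1) - S j) * (x - S j)) := by
    intro j x; simp only [hLdef, hPdef]; ring
  have hLup : ∀ j x, S j ≤ x → x ≤ S (j+1) → a j * f x ≤ L j x := by
    intro j x h1 h2
    rw [hLform]
    exact mul_le_mul_of_nonneg_left
      (secant_upper hfconv (hSpos j).le (hSlt j) h1 h2) (ha0 j).le
  have hLlo : ∀ j x, 0 ≤ x → (x ≤ S j ∨ S (j+1) ≤ x) → L j x ≤ a j * f x := by
    intro j x hx hcase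
    rw [hLform]
    rcases hcase with h | h
    · exact mul_le_mul_of_nonneg_left
        (secant_lower_left hfconv hx (hSpos j).le (hSlt j) h) (ha0 j).le
    · exact mul_le_mul_of_nonneg_left
        (secant_lower_right hfconv (hSpos j).le (hSlt j) h) (ha0 j).le
  have hLbd : ∀ j x, 0 ≤ x → L j x ≤ a j * f (2*x) := by
    intro j x hx
    rcases le_total x (S j) with h | h
    · exact le_trans (hLlo j x hx (Or.inl h))
        (mul_le_mul_of_nonneg_left (hfm x (2*x) hx (by linarith)) (ha0 j).le)
    rcases le_total x (S (j+1)) with h2 | h2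
    · have hmono : L j x ≤ L j (S (j+1)) := by
        simp only [hLdef]
        have := mul_le_mul_of_nonneg_left (show x - S j ≤ S (j+1) - S j by linarith) (hP0 j)
        linarith
      have hval : L j (S (j+1)) = a j * f (S (j+1)) := by
        rw [hLform]
        have hne : S (j+1) - S j ≠ 0 := by linarith [hSlt j]
        field_simp
        ring
      have hlast : a j * f (S (j+1)) ≤ a j * f (2*x) := by
        apply mul_le_mul_of_nonneg_left ?_ (ha0 j).le
        apply hfm _ _ (by linarith [hSpos j, hSlt j]) 
        rw [hSsucc j]; linarith
      rw [hval] at hmono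
      exact le_trans hmono hlast
    · exact le_trans (hLlo j x hx (Or.inr h2))
        (mul_le_mul_of_nonneg_left (hfm x (2*x) hx (by linarith)) (ha0 j).le)
  -- γ
  set γ : ℝ → ℝ := fun u => max u (⨆ j, L j u) with hγdef
  have hBdd : ∀ u : ℝ, 0 ≤ u → BddAbove (Set.range fun j => L j u) := by
    intro u hu
    refine ⟨a 0 * f (2*u), ?_⟩
    rintro x ⟨j, rfl⟩
    exact le_trans (hLbd j u hu)
      (mul_le_mul_of_nonneg_right (haanti 0 j (Nat.zero_le j)) (hfnn (2*u) (by linarith)))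
  have hγgeU : ∀ u : ℝ, u ≤ γ u := fun u => le_max_left _ _
  have hγgeL : ∀ u : ℝ, 0 ≤ u → ∀ j, L j u ≤ γ u := by
    intro u hu j
    exact le_trans (le_ciSup (hBdd u hu) j) (le_max_right _ _)
  have hγnn : ∀ u : ℝ, 0 ≤ u → 0 ≤ γ u := fun u hu => le_trans hu (hγgeU u)
  have hγ0 : γ 0 = 0 := by
    rw [hγdef]
    simp only
    rw [max_eq_left]
    apply Real.iSup_le ?_ le_rfl
    intro j
    have := hLbd j 0 le_rfl
    simpa [hf0] using this
  have hγlowf : ∀ u j, S j ≤ u → u ≤ S (j+1) → a j * f u ≤ γ u := by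
    intro u j h1 h2
    exact le_trans (hLup j u h1 h2) (hγgeL u (le_trans (hSpos j).le h1) j)
  have hγle : ∀ v M : ℝ, v ≤ M → (∀ j, L j v ≤ M) → γ v ≤ M := by
    intro v M h1 h2
    simp only [hγdef]
    exact max_le h1 (ciSup_le h2)
  have hγconv : ConvexOn ℝ (Set.Ici 0) γ := by
    refine ⟨convex_Ici 0, ?_⟩
    intro x hx y hy s t hs ht hst
    simp only [smul_eq_mul]
    have hx0 : (0:ℝ) ≤ x := hx
    have hy0 : (0:ℝ) ≤ y := hy
    apply hγle
    · exact add_le_add (mul_le_mul_of_nonneg_left (hγgeU x) hs)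
        (mul_le_mul_of_nonneg_left (hγgeU y) ht)
    · intro j
      have haff : L j (s*x+t*y) = s * L j x + t * L j y := by
        simp only [hLdef]
        linear_combination (P j * S j - a j * f (S j)) * hst
      rw [haff]
      exact add_le_add (mul_le_mul_of_nonneg_left (hγgeL x hx0 j) hs)
        (mul_le_mul_of_nonneg_left (hγgeL y hy0 j) ht)
  have hγsm : StrictMonoOn γ (Set.Ici 0) := by
    intro x hx y hy hxy
    have hx0 : (0:ℝ) ≤ x := hx
    have hy0 : 0 < y := lt_of_le_of_lt hx0 hxy
    have hγy : 0 < γ y := lt_of_lt_of_le hy0 (hγgeU y)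
    rcases eq_or_lt_of_le hx0 with h0 | hxpos
    · rw [← h0, hγ0]; exact hγy
    · have hxy1 : x/y < 1 := (div_lt_one hy0).2 hxy
      have hxy0 : 0 ≤ x/y := by positivity
      have hcomb := hγconv.2 Set.self_mem_Ici (hy : y ∈ Set.Ici 0)
        (by linarith : (0:ℝ) ≤ 1 - x/y) hxy0 (by ring)
      simp only [smul_eq_mul, mul_zero, zero_add, hγ0] at hcomb
      rw [div_mul_cancel₀ x hy0.ne'] at hcomb
      calc γ x ≤ x/y * γ y := hcomb
        _ < 1 * γ y := mul_lt_mul_of_pos_right hxy1 hγy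
        _ = γ y := one_mul _
  refine ⟨γ, hγ0, hγsm, hγconv, hγnn, ?_, ?_, ⟨s₀, hs₀pos, ?_⟩, ?_⟩
  · -- superlinearity
    rw [tendsto_atTop]
    intro M
    set M' : ℝ := max M 1 with hM'def
    have hM'1 : 1 ≤ M' := le_max_right _ _
    obtain ⟨X, hX⟩ := Filter.eventually_atTop.1 (hfdiv.eventually_ge_atTop (M'^2))
    rw [eventually_atTop]
    refine ⟨max (2*X) s₀, fun u hu => ?_⟩
    have hus : s₀ ≤ u := le_trans (le_max_right _ _) hu
    have huX : 2*X ≤ u := le_trans (le_max_left _ _) hu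
    have hupos : 0 < u := lt_of_lt_of_le hs₀pos hus
    obtain ⟨j, hj1, hj2⟩ := hidx u hus
    have hSj : X ≤ S j := by
      have h := hSsucc j
      linarith
    have hfSj : 0 < f (S j) := hfpos _ (hSpos j)
    have hr : M'^2 ≤ f (S j) / S j := hX (S j) hSj
    have hrm : f (S j)/S j ≤ f u / u := hratio (S j) u (hSpos j) hj1
    have hlow : a j * f u ≤ γ u := hγlowf u j hj1 hj2.le
    have hkey : M' ≤ d j * (f (S j)/S j) := by
      have hdj : d j * (f (S j)/S j) = Real.sqrt (f (S j)/S j) := by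
        have e1 : S j / f (S j) = (f (S j)/S j)⁻¹ := by rw [inv_div]
        simp only [hddef]
        rw [e1, Real.sqrt_inv, inv_mul_eq_div, Real.div_sqrt]
      rw [hdj]
      calc M' = Real.sqrt (M'^2) := (Real.sqrt_sq (by linarith)).symm
        _ ≤ _ := Real.sqrt_le_sqrt hr
    have hfu0 : 0 ≤ f u := hfnn u hupos.le
    have hfin : M' ≤ γ u / u := by
      calc M' ≤ d j * (f (S j)/S j) := hkey
        _ ≤ d j * (f u / u) := mul_le_mul_of_nonneg_left hrm (hd0 j).le
        _ = (d j * f u) / u := by ring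
        _ ≤ (a j * f u) / u := (div_le_div_iff_of_pos_right hupos).2
            (mul_le_mul_of_nonneg_right (le_max_right _ _) hfu0)
        _ ≤ γ u / u := (div_le_div_iff_of_pos_right hupos).2 hlow
    exact le_trans (le_max_left _ _) hfin
  · -- Delta2
    refine ⟨max 3 K4, lt_of_lt_of_le (by norm_num) (le_max_left _ _), s₀, hs₀pos, ?_⟩
    intro u hu
    obtain ⟨j, hj1, hj2⟩ := hidx u hu
    have hupos : 0 < u := lt_of_lt_of_le hs₀pos hu
    have hγu : 0 ≤ γ u := hγnn u hupos.le
    have hlow : a j * f u ≤ γ u := hγlowf u j hj1 hj2.le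
    have hC3 : (3:ℝ) ≤ max 3 K4 := le_max_left _ _
    have hCK : K4 ≤ max 3 K4 := le_max_right _ _
    have h2u0 : (0:ℝ) ≤ 2*u := by linarith
    apply hγle
    · have := hγgeU u
      nlinarith
    · intro i
      rcases lt_or_ge i j with hij | hij
      · have h2Si : 2 * S i ≤ u := by
          have h1 : S (i+1) ≤ S j := hSmono (i+1) j (by omega)
          have h2 := hSsucc i
          linarith
        have hLgam : L i u ≤ γ u := hγgeL u hupos.le i
        have haf : 0 ≤ a i * f (S i) := mul_nonneg (ha0 i).le (hfnn _ (hSpos i).le)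
        have hPi := hP0 i
        have hLiu : L i (2*u) ≤ 3 * L i u := by
          simp only [hLdef]
          nlinarith [mul_nonneg hPi (show (0:ℝ) ≤ u - 2*S i by linarith)]
        calc L i (2*u) ≤ 3 * L i u := hLiu
          _ ≤ 3 * γ u := by linarith
          _ ≤ max 3 K4 * γ u := mul_le_mul_of_nonneg_right hC3 hγu
      · have h1 := hLbd i (2*u) h2u0
        have e : 2*(2*u) = 4*u := by ring
        rw [e] at h1
        have h4 : f (4*u) ≤ K4 * f u := hK4' u hu
        have hai : a i ≤ a j := haanti j i hij
        have hf4 : 0 ≤ f (4*u) := hfnn _ (by linarith)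
        calc L i (2*u) ≤ a i * f (4*u) := h1
          _ ≤ a j * f (4*u) := mul_le_mul_of_nonneg_right hai hf4
          _ ≤ a j * (K4 * f u) := mul_le_mul_of_nonneg_left h4 (ha0 j).le
          _ = K4 * (a j * f u) := by ring
          _ ≤ K4 * γ u := mul_le_mul_of_nonneg_left hlow (by linarith : (0:ℝ) ≤ K4)
          _ ≤ max 3 K4 * γ u := mul_le_mul_of_nonneg_right hCK hγu
  · -- β domination
    intro u hu
    obtain ⟨j, hj1, hj2⟩ := hidx u hu
    have hupos : 0 < u := lt_of_lt_of_le hs₀pos hu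
    have hfu : 0 < f u := hfpos u hupos
    have hq := hbq j u hj1
    have h1 : β u ≤ b j * f u := by
      simp only [hQdef] at hq
      rw [div_le_iff₀ hfu] at hq
      linarith
    calc β u ≤ b j * f u := h1
      _ ≤ a j * f u := mul_le_mul_of_nonneg_right (hba j) hfu.le
      _ ≤ γ u := hγlowf u j hj1 hj2.le
  · -- o(α)
    rw [Metric.tendsto_atTop]
    intro ε hε
    have hε2 : 0 < ε/2 := by linarith
    have hK4pos : 0 < K4 := lt_of_lt_of_le one_pos hK41
    set ε₁ : ℝ := (ε/2) / K4 with hε₁def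
    have hε₁pos : 0 < ε₁ := div_pos hε2 hK4pos
    obtain ⟨I, hI⟩ := hasmall ε₁ hε₁pos
    set Psum : ℝ := ∑ i ∈ Finset.range I, P i with hPsumdef
    set C0 : ℝ := a 0 * f (S I) with hC0def
    have hPsum0 : 0 ≤ Psum := Finset.sum_nonneg (fun i _ => hP0 i)
    have hC00 : 0 ≤ C0 := mul_nonneg (ha0 0).le (hfnn _ (hSpos I).le)
    obtain ⟨T, hT⟩ := Filter.eventually_atTop.1 (hαinf.eventually_ge_atTop ((Psum + 1)/(ε/2)))
    refine ⟨max T (max s₀ (C0 + 1)), fun u hu => ?_⟩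
    have huT : T ≤ u := le_trans (le_max_left _ _) hu
    have hus₀ : s₀ ≤ u := le_trans (le_trans (le_max_left _ _) (le_max_right _ _)) hu
    have huC : C0 + 1 ≤ u := le_trans (le_trans (le_max_right _ _) (le_max_right _ _)) hu
    have hupos : 0 < u := lt_of_lt_of_le hs₀pos hus₀
    have hαu : 0 < α u := by
      have h := hfpos u hupos
      have he : α u = f u + A := by simp [hfdef]
      linarith
    have hTu := hT u huT
    have hTu' : (Psum + 1)/(ε/2) * u ≤ α u := by
      rw [le_div_iff₀ hupos] at hTu
      exact hTu
    have h3 : (ε/2) * ((Psum + 1)/(ε/2) * u) = (Psum+1) * u := by field_simp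
    have h4 := mul_le_mul_of_nonneg_left hTu' hε2.le
    rw [h3] at h4
    have hmain : γ u ≤ (ε/2) * α u := by
      apply hγle
      · nlinarith
      · intro i
        rcases lt_or_ge i I with hiI | hiI
        · have ha' : a i * f (S i) ≤ C0 := by
            rw [hC0def]
            exact mul_le_mul (haanti 0 i (Nat.zero_le i))
              (hfm _ _ (hSpos i).le (hSmono i I hiI.le)) (hfnn _ (hSpos i).le) (ha0 0).le
          have hPi : P i ≤ Psum := Finset.single_le_sum (fun k _ => hP0 k) (Finset.mem_range.2 hiI)
          have h1 : L i u ≤ C0 + Psum * u := by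
            simp only [hLdef]
            nlinarith [hP0 i, hSpos i, mul_le_mul_of_nonneg_right hPi hupos.le,
              mul_nonneg (hP0 i) (hSpos i).le]
          have h2 : C0 + Psum * u ≤ (Psum + 1) * u := by nlinarith
          exact le_trans h1 (le_trans h2 h4)
        · have h1 := hLbd i u hupos.le
          have h2 : f (2*u) ≤ K4 * f u := hK2' u hus₀
          have hai : a i ≤ ε₁ := le_trans (haanti I i hiI) hI
          have hf2 : 0 ≤ f (2*u) := hfnn _ (by linarith)
          have he : ε₁ * (K4 * f u) = (ε/2) * f u := by
            rw [hε₁def]; field_simp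
          have hfα : f u ≤ α u := by
            have h5 : f u = α u - A := by simp [hfdef]
            linarith
          calc L i u ≤ a i * f (2*u) := h1
            _ ≤ ε₁ * f (2*u) := mul_le_mul_of_nonneg_right hai hf2
            _ ≤ ε₁ * (K4 * f u) := mul_le_mul_of_nonneg_left h2 hε₁pos.le
            _ = (ε/2) * f u := he
            _ ≤ (ε/2) * α u := mul_le_mul_of_nonneg_left hfα hε2.le
    have hγnnu : 0 ≤ γ u := hγnn u hupos.le
    rw [Real.dist_eq, sub_zero, abs_of_nonneg (div_nonneg hγnnu hαu.le)]
    rw [div_lt_iff₀ hαu]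
    nlinarith
end
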